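/- ℓ₁-concentration of the empirical distribution of a categorical random variable: if q₁,…,q_n are i.i.d. draws from a distribution p on a finite set of size m, and p̂ is the empirical frequency vector, then for any δ ∈ (0,1), with probability at least 1 − δ, ‖p̂ − p‖₁ ≤ √(2m·log(2/δ)/n). -/

import Mathlib

open MeasureTheory ProbabilityTheory Finset
open Real in

lemma bernoulli_mgf_le {p t : ℝ} (hp0 : 0 ≤ p) (hp1 : p ≤ 1) (ht : 0 ≤ t) :
    (1 - p) * Real.exp (-(p * t)) + p * Real.exp ((1 - p) * t) ≤ Real.exp (t ^ 2 / 8) := by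
  set D : ℝ → ℝ := fun s => 1 - p + p * Real.exp s with hD
  have hDpos : ∀ s, 0 < D s := by
    intro s
    rcases eq_or_lt_of_le hp0 with h | h
    · simp [hD, ← h]
    · have := Real.exp_pos s
      have : 0 < p * Real.exp s := mul_pos h this
      simp only [hD]; nlinarith
  have hDd : ∀ s, HasDerivAt D (p * Real.exp s) s := by
    intro s
    exact ((Real.hasDerivAt_exp s).const_mul p).const_add (1 - p)
  set ψ : ℝ → ℝ := fun s => p + s / 4 - p * Real.exp s / D s with hψ
  have hψd : ∀ s, HasDerivAt ψ
      (1/4 - (p * Real.exp s * D s - p * Real.exp s * (p * Real.exp s)) / (D s) ^ 2) s := by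
    intro s
    have h1 : HasDerivAt (fun s => p * Real.exp s) (p * Real.exp s) s :=
      (Real.hasDerivAt_exp s).const_mul p
    have h2 := h1.div (hDd s) (hDpos s).ne'
    have h3 : HasDerivAt (fun s => p + s / 4) (1/4) s := by
      simpa using ((hasDerivAt_id s).div_const 4).const_add p
    exact h3.sub h2
  have hψmono : Monotone ψ := by
    apply monotone_of_deriv_nonneg
    · exact fun s => (hψd s).differentiableAt
    · intro s
      rw [(hψd s).deriv]
      set a := p * Real.exp s with ha
      have ha0 : 0 ≤ a := mul_nonneg hp0 (Real.exp_pos s).le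
      have hb0 : 0 ≤ 1 - p := by linarith
      have hDs : D s = 1 - p + a := rfl
      have hD2 : 0 < (D s) ^ 2 := pow_pos (hDpos s) 2
      rw [sub_nonneg, div_le_iff₀ hD2, hDs]
      nlinarith [sq_nonneg (a - (1 - p))]
  have hψ0 : ψ 0 = 0 := by simp [hψ, hD]
  set φ : ℝ → ℝ := fun s => p * s + s ^ 2 / 8 - Real.log (D s) with hφ
  have hφd : ∀ s, HasDerivAt φ (ψ s) s := by
    intro s
    have h1 : HasDerivAt (fun s : ℝ => p * s) p s := by
      simpa using (hasDerivAt_id s).const_mul p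
    have h2 : HasDerivAt (fun s : ℝ => s ^ 2 / 8) (2 * s / 8) s := by
      simpa using (hasDerivAt_pow 2 s).div_const 8
    have h3 : HasDerivAt (fun s => Real.log (D s)) (p * Real.exp s / D s) s :=
      (hDd s).log (hDpos s).ne'
    have := (h1.add h2).sub h3
    refine this.congr_deriv ?_
    show _ = ψ s
    simp only [hψ]; ring
  have hφ0 : φ 0 = 0 := by simp [hφ, hD]
  have hφt : 0 ≤ φ t := by
    have hmono : MonotoneOn φ (Set.Ici 0) := by
      apply monotoneOn_of_deriv_nonneg (convex_Ici 0)
      · exact (Differentiable.continuous (fun s => (hφd s).differentiableAt)).continuousOn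
      · exact fun s _ => ((hφd s).differentiableAt).differentiableWithinAt
      · intro s hs
        rw [(hφd s).deriv]
        rw [interior_Ici] at hs
        calc (0:ℝ) = ψ 0 := hψ0.symm
          _ ≤ ψ s := hψmono (le_of_lt hs)
    have := hmono (Set.self_mem_Ici) (Set.mem_Ici.mpr ht) ht
    rwa [hφ0] at this
  have hkey : Real.log (D t) ≤ p * t + t ^ 2 / 8 := by
    simp only [hφ] at hφt; linarith
  have hDle : D t ≤ Real.exp (p * t + t ^ 2 / 8) :=
    (Real.log_le_iff_le_exp (hDpos t)).mp hkey
  have : (1 - p) * Real.exp (-(p * t)) + p * Real.exp ((1 - p) * t)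
      = Real.exp (-(p * t)) * D t := by
    have he : Real.exp ((1 - p) * t) = Real.exp (-(p * t)) * Real.exp t := by
      rw [← Real.exp_add]; ring_nf
    simp only [hD]
    rw [he]; ring
  rw [this]
  calc Real.exp (-(p * t)) * D t ≤ Real.exp (-(p * t)) * Real.exp (p * t + t ^ 2 / 8) := by
        exact mul_le_mul_of_nonneg_left hDle (Real.exp_pos _).le
    _ = Real.exp (t ^ 2 / 8) := by rw [← Real.exp_add]; ring_nf

lemma chernoff_subset
    {Ω : Type*} [MeasurableSpace Ω] (P : Measure Ω) [IsProbabilityMeasure P]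
    (n m : ℕ) (p : Fin m → ℝ) (hp : ∀ i, 0 ≤ p i) (hsum : ∑ i, p i = 1)
    (q : Fin n → Ω → Fin m) (hmeas : ∀ t, Measurable (q t))
    (hdist : ∀ t i, P {ω | q t ω = i} = ENNReal.ofReal (p i))
    (hindep : iIndepFun q P)
    (A : Finset (Fin m)) (c : ℝ) (hc : 0 ≤ c) :
    P {ω | (n : ℝ) * c ≤ ∑ t, ((if q t ω ∈ A then (1:ℝ) else 0) - ∑ i ∈ A, p i)}
      ≤ ENNReal.ofReal (Real.exp (-(2 * n * c ^ 2))) := by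
  classical
  set pA : ℝ := ∑ i ∈ A, p i with hpA
  have hpA0 : 0 ≤ pA := Finset.sum_nonneg fun i _ => hp i
  have hpA1 : pA ≤ 1 := by
    rw [← hsum]
    exact Finset.sum_le_sum_of_subset_of_nonneg (Finset.subset_univ A) fun i _ _ => hp i
  set g : Fin m → ℝ := fun i => (if i ∈ A then (1:ℝ) else 0) - pA with hg
  have hgmeas : Measurable g := measurable_of_finite g
  set Y : Fin n → Ω → ℝ := fun t => g ∘ q t with hY
  have hYmeas : ∀ t, Measurable (Y t) := fun t => hgmeas.comp (hmeas t)
  have hYindep : iIndepFun Y P :=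
    hindep.comp (fun _ => g) (fun _ => hgmeas)
  set t₀ : ℝ := 4 * c with ht₀
  have ht₀0 : 0 ≤ t₀ := by positivity
  have hgbd : ∀ i, g i ≤ 1 := by
    intro i; simp only [hg]; split_ifs <;> linarith
  have h_int : ∀ t, Integrable (fun ω => Real.exp (t₀ * Y t ω)) P := by
    intro t
    refine ⟨(((hYmeas t).const_mul t₀).exp).aestronglyMeasurable, ?_⟩
    apply MeasureTheory.HasFiniteIntegral.of_bounded (C := Real.exp t₀)
    filter_upwards with ω
    rw [Real.norm_eq_abs, abs_of_nonneg (Real.exp_pos _).le]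
    apply Real.exp_le_exp.mpr
    calc t₀ * Y t ω ≤ t₀ * 1 := mul_le_mul_of_nonneg_left (hgbd _) ht₀0
      _ = t₀ := mul_one _
  -- compute the mgf of each Y t
  have hmgf : ∀ t, mgf (Y t) P t₀ ≤ Real.exp (t₀ ^ 2 / 8) := by
    intro t
    have hmap : ∀ i, (P.map (q t)) {i} = ENNReal.ofReal (p i) := by
      intro i
      rw [Measure.map_apply (hmeas t) (MeasurableSet.singleton i)]
      have : q t ⁻¹' {i} = {ω | q t ω = i} := by ext ω; simp
      rw [this, hdist]
    haveI : IsProbabilityMeasure (P.map (q t)) :=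
      Measure.isProbabilityMeasure_map (hmeas t).aemeasurable
    have hint2 : Integrable (fun i => Real.exp (t₀ * g i)) (P.map (q t)) :=
      Integrable.of_finite
    have h1 : mgf (Y t) P t₀ = ∑ i, p i * Real.exp (t₀ * g i) := by
      have e0 : mgf (Y t) P t₀ = ∫ i, Real.exp (t₀ * g i) ∂(P.map (q t)) := by
        rw [integral_map (hmeas t).aemeasurable
          (((hgmeas.const_mul t₀).exp).aestronglyMeasurable)]
        rfl
      rw [e0, integral_fintype]
      refine Finset.sum_congr rfl fun i _ => ?_
      rw [measureReal_def, hmap i, ENNReal.toReal_ofReal (hp i), smul_eq_mul]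
      exact hint2
    rw [h1]
    have h2 : ∑ i, p i * Real.exp (t₀ * g i)
        = (1 - pA) * Real.exp (-(pA * t₀)) + pA * Real.exp ((1 - pA) * t₀) := by
      rw [← Finset.sum_filter_add_sum_filter_not Finset.univ (· ∈ A)]
      have hrest : ∑ i ∈ Finset.univ.filter (· ∉ A), p i = 1 - pA := by
        have := Finset.sum_filter_add_sum_filter_not Finset.univ (· ∈ A) p
        rw [Finset.filter_univ_mem, hsum] at this
        linarith
      have e1 : ∑ i ∈ Finset.univ.filter (· ∈ A), p i * Real.exp (t₀ * g i)
          = pA * Real.exp ((1 - pA) * t₀) := by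
        have : ∀ i ∈ Finset.univ.filter (· ∈ A),
            p i * Real.exp (t₀ * g i) = p i * Real.exp ((1 - pA) * t₀) := by
          intro i hi
          rw [Finset.mem_filter] at hi
          simp only [hg, if_pos hi.2]
          ring_nf
        rw [Finset.sum_congr rfl this, ← Finset.sum_mul, Finset.filter_univ_mem]
      have e2 : ∑ i ∈ Finset.univ.filter (· ∉ A), p i * Real.exp (t₀ * g i)
          = (1 - pA) * Real.exp (-(pA * t₀)) := by
        have : ∀ i ∈ Finset.univ.filter (· ∉ A),
            p i * Real.exp (t₀ * g i) = p i * Real.exp (-(pA * t₀)) := by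
          intro i hi
          rw [Finset.mem_filter] at hi
          simp only [hg, if_neg hi.2]
          ring_nf
        rw [Finset.sum_congr rfl this, ← Finset.sum_mul, hrest]
      rw [e1, e2]; ring
    rw [h2]
    exact bernoulli_mgf_le hpA0 hpA1 ht₀0
  set S : Ω → ℝ := ∑ t, Y t with hS
  have hSint : Integrable (fun ω => Real.exp (t₀ * S ω)) P :=
    hYindep.integrable_exp_mul_sum hYmeas (fun t _ => h_int t)
  have hsetEq : {ω | (n : ℝ) * c ≤ ∑ t, ((if q t ω ∈ A then (1:ℝ) else 0) - ∑ i ∈ A, p i)}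
      = {ω | (n : ℝ) * c ≤ S ω} := by
    ext ω
    simp only [Set.mem_setOf_eq, hS, Finset.sum_apply, hY, hg, Function.comp, hpA]
  have hch := measure_ge_le_exp_mul_mgf (μ := P) (X := S) ((n:ℝ) * c) ht₀0 hSint
  have hprod : mgf S P t₀ = ∏ t, mgf (Y t) P t₀ := hYindep.mgf_sum hYmeas Finset.univ
  have hprodle : mgf S P t₀ ≤ Real.exp (t₀ ^ 2 / 8) ^ n := by
    rw [hprod]
    calc ∏ t, mgf (Y t) P t₀ ≤ ∏ _t : Fin n, Real.exp (t₀ ^ 2 / 8) :=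
          Finset.prod_le_prod (fun t _ => mgf_nonneg) (fun t _ => hmgf t)
      _ = Real.exp (t₀ ^ 2 / 8) ^ n := by
          rw [Finset.prod_const, Finset.card_univ, Fintype.card_fin]
  have hfinal : (P {ω | (n : ℝ) * c ≤ S ω}).toReal ≤ Real.exp (-(2 * n * c ^ 2)) := by
    calc (P {ω | (n : ℝ) * c ≤ S ω}).toReal
        ≤ Real.exp (-t₀ * ((n:ℝ) * c)) * mgf S P t₀ := hch
      _ ≤ Real.exp (-t₀ * ((n:ℝ) * c)) * Real.exp (t₀ ^ 2 / 8) ^ n :=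
          mul_le_mul_of_nonneg_left hprodle (Real.exp_pos _).le
      _ = Real.exp (-(2 * n * c ^ 2)) := by
          rw [← Real.exp_nat_mul, ← Real.exp_add]
          congr 1
          rw [ht₀]; ring
  rw [hsetEq]
  calc P {ω | (n : ℝ) * c ≤ S ω}
      = ENNReal.ofReal (P {ω | (n : ℝ) * c ≤ S ω}).toReal :=
        (ENNReal.ofReal_toReal (measure_ne_top P _)).symm
    _ ≤ ENNReal.ofReal (Real.exp (-(2 * n * c ^ 2))) := ENNReal.ofReal_le_ofReal hfinal

theorem empirical_distribution_l1_concentration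
    {Ω : Type*} [MeasurableSpace Ω] (P : Measure Ω) [IsProbabilityMeasure P]
    (n m : ℕ) (hn : 0 < n) (hm : 0 < m)
    (p : Fin m → ℝ) (hp : ∀ i, 0 ≤ p i) (hsum : ∑ i, p i = 1)
    (q : Fin n → Ω → Fin m)
    (hmeas : ∀ t, Measurable (q t))
    (hdist : ∀ t i, P {ω | q t ω = i} = ENNReal.ofReal (p i))
    (hindep : iIndepFun q P)
    (δ : ℝ) (hδ : δ ∈ Set.Ioo (0:ℝ) 1) :
    ENNReal.ofReal (1 - δ) ≤
      P {ω | ∑ i, |((Finset.univ.filter (fun t => q t ω = i)).card : ℝ) / n - p i|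
              ≤ Real.sqrt (2 * m * Real.log (2/δ) / n)} := by
  classical
  obtain ⟨hδ0, hδ1⟩ := hδ
  have hnR : (0:ℝ) < n := by exact_mod_cast hn
  have hmR : (0:ℝ) < m := by exact_mod_cast hm
  have hlogpos : 0 < Real.log (2/δ) := Real.log_pos (by rw [lt_div_iff₀ hδ0]; linarith)
  set ε : ℝ := Real.sqrt (2 * m * Real.log (2/δ) / n) with hε
  have harg : 0 ≤ 2 * m * Real.log (2/δ) / n := by positivity
  have hε2 : ε ^ 2 = 2 * m * Real.log (2/δ) / n := Real.sq_sqrt harg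
  have hεpos : 0 < ε := Real.sqrt_pos.mpr (by positivity)
  set F : Ω → ℝ := fun ω =>
    ∑ i, |((Finset.univ.filter (fun t => q t ω = i)).card : ℝ) / n - p i| with hF
  show ENNReal.ofReal (1 - δ) ≤ P {ω | F ω ≤ ε}
  -- counts as sums of indicators
  have hcnt : ∀ (i : Fin m) (ω : Ω),
      ((Finset.univ.filter (fun t => q t ω = i)).card : ℝ)
        = ∑ t, (if q t ω = i then (1:ℝ) else 0) := by
    intro i ω
    rw [Finset.card_filter]
    push_cast
    rfl
  have hcntA : ∀ (ω : Ω) (A : Finset (Fin m)),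
      ∑ i ∈ A, ((Finset.univ.filter (fun t => q t ω = i)).card : ℝ)
        = ∑ t, (if q t ω ∈ A then (1:ℝ) else 0) := by
    intro ω A
    calc ∑ i ∈ A, ((Finset.univ.filter (fun t => q t ω = i)).card : ℝ)
        = ∑ i ∈ A, ∑ t, (if q t ω = i then (1:ℝ) else 0) :=
          Finset.sum_congr rfl fun i _ => hcnt i ω
      _ = ∑ t, ∑ i ∈ A, (if q t ω = i then (1:ℝ) else 0) := Finset.sum_comm
      _ = ∑ t, (if q t ω ∈ A then (1:ℝ) else 0) := by
          refine Finset.sum_congr rfl fun t _ => ?_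
          simp [eq_comm]
  have htotal : ∀ ω : Ω,
      ∑ i, ((Finset.univ.filter (fun t => q t ω = i)).card : ℝ) = n := by
    intro ω
    rw [hcntA ω Finset.univ]
    simp
  -- measurability
  have hFmeas : Measurable F := by
    apply Finset.measurable_sum
    intro i _
    apply Measurable.abs
    apply Measurable.sub_const
    apply Measurable.div_const
    have : (fun ω => ((Finset.univ.filter (fun t => q t ω = i)).card : ℝ))
        = fun ω => ∑ t, (if q t ω = i then (1:ℝ) else 0) := funext fun ω => hcnt i ω
    rw [this]
    apply Finset.measurable_sum
    intro t _
    exact Measurable.ite ((hmeas t) (MeasurableSet.singleton i))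
      measurable_const measurable_const
  have hBmeas : MeasurableSet {ω | ε < F ω} :=
    measurableSet_lt measurable_const hFmeas
  -- inclusion of the bad event into the union
  have hsub : {ω | ε < F ω} ⊆
      ⋃ A ∈ (Finset.univ : Finset (Finset (Fin m))),
        {ω | (n : ℝ) * (ε/2) ≤ ∑ t, ((if q t ω ∈ A then (1:ℝ) else 0) - ∑ i ∈ A, p i)} := by
    intro ω hω
    simp only [Set.mem_setOf_eq, hF] at hω
    set x : Fin m → ℝ := fun i =>
      ((Finset.univ.filter (fun t => q t ω = i)).card : ℝ) / n - p i with hx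
    set A : Finset (Fin m) := Finset.univ.filter (fun i => 0 ≤ x i) with hA
    have hx0 : ∑ i, x i = 0 := by
      simp only [hx, Finset.sum_sub_distrib, hsum, ← Finset.sum_div, htotal ω]
      field_simp
      simp
    have hsplit := Finset.sum_filter_add_sum_filter_not Finset.univ (fun i => 0 ≤ x i) x
    have habs : ∑ i, |x i| = 2 * ∑ i ∈ A, x i := by
      rw [← Finset.sum_filter_add_sum_filter_not Finset.univ (fun i => 0 ≤ x i) (fun i => |x i|)]
      have h1 : ∑ i ∈ Finset.univ.filter (fun i => 0 ≤ x i), |x i| = ∑ i ∈ A, x i :=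
        Finset.sum_congr rfl fun i hi => abs_of_nonneg (Finset.mem_filter.mp hi).2
      have h2 : ∑ i ∈ Finset.univ.filter (fun i => ¬ 0 ≤ x i), |x i|
          = -∑ i ∈ Finset.univ.filter (fun i => ¬ 0 ≤ x i), x i := by
        rw [← Finset.sum_neg_distrib]
        exact Finset.sum_congr rfl fun i hi =>
          abs_of_neg (not_le.mp (Finset.mem_filter.mp hi).2)
      rw [h1, h2]
      have : ∑ i ∈ Finset.univ.filter (fun i => ¬ 0 ≤ x i), x i = -∑ i ∈ A, x i := by
        rw [hx0] at hsplit
        rw [← hA] at hsplit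
        linarith
      rw [this]; ring
    have hA2 : ε / 2 < ∑ i ∈ A, x i := by rw [habs] at hω; linarith
    refine Set.mem_iUnion₂.mpr ⟨A, Finset.mem_univ A, ?_⟩
    simp only [Set.mem_setOf_eq]
    have hsum_eq : ∑ t, ((if q t ω ∈ A then (1:ℝ) else 0) - ∑ i ∈ A, p i)
        = (n:ℝ) * ∑ i ∈ A, x i := by
      rw [Finset.sum_sub_distrib, ← hcntA ω A, Finset.sum_const, Finset.card_univ,
        Fintype.card_fin]
      simp only [hx, Finset.sum_sub_distrib, ← Finset.sum_div]
      have hn0 : (n:ℝ) ≠ 0 := hnR.ne'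
      field_simp
      rw [nsmul_eq_mul]
    rw [hsum_eq]
    have := mul_le_mul_of_nonneg_left hA2.le hnR.le
    linarith
  -- probability of the bad event
  have hbound : ∀ A : Finset (Fin m),
      P {ω | (n : ℝ) * (ε/2) ≤ ∑ t, ((if q t ω ∈ A then (1:ℝ) else 0) - ∑ i ∈ A, p i)}
        ≤ ENNReal.ofReal ((δ/2)^m) := by
    intro A
    refine (chernoff_subset P n m p hp hsum q hmeas hdist hindep A (ε/2)
      (by positivity)).trans (le_of_eq ?_)
    congr 1
    have hexp : -(2 * (n:ℝ) * (ε/2) ^ 2) = (m:ℝ) * Real.log (δ/2) := by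
      have h1 : ((ε:ℝ)/2)^2 = ε^2/4 := by ring
      have h2 : Real.log (δ/2) = -Real.log (2/δ) := by
        rw [← Real.log_inv]
        congr 1
        field_simp
      rw [h1, hε2, h2]
      field_simp
      ring
    rw [hexp, ← Real.log_pow, Real.exp_log (by positivity)]
  have hbad : P {ω | ε < F ω} ≤ ENNReal.ofReal δ := by
    calc P {ω | ε < F ω}
        ≤ P (⋃ A ∈ (Finset.univ : Finset (Finset (Fin m))),
            {ω | (n : ℝ) * (ε/2) ≤ ∑ t, ((if q t ω ∈ A then (1:ℝ) else 0) - ∑ i ∈ A, p i)}) :=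
          measure_mono hsub
      _ ≤ ∑ A ∈ (Finset.univ : Finset (Finset (Fin m))),
            P {ω | (n : ℝ) * (ε/2) ≤ ∑ t, ((if q t ω ∈ A then (1:ℝ) else 0) - ∑ i ∈ A, p i)} :=
          measure_biUnion_finset_le _ _
      _ ≤ ∑ _A ∈ (Finset.univ : Finset (Finset (Fin m))), ENNReal.ofReal ((δ/2)^m) :=
          Finset.sum_le_sum fun A _ => hbound A
      _ = (2^m : ℕ) * ENNReal.ofReal ((δ/2)^m) := by
          rw [Finset.sum_const, Finset.card_univ, Fintype.card_finset, Fintype.card_fin,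
            nsmul_eq_mul]
      _ = ENNReal.ofReal (2^m * (δ/2)^m) := by
          rw [ENNReal.ofReal_mul (by positivity)]
          congr
          rw [ENNReal.ofReal_pow (by norm_num)]
          norm_num
      _ = ENNReal.ofReal (δ^m) := by
          congr 1
          rw [← mul_pow]
          congr 1
          ring
      _ ≤ ENNReal.ofReal δ :=
          ENNReal.ofReal_le_ofReal (pow_le_of_le_one hδ0.le hδ1.le hm.ne')
  -- conclude
  have hcompl : {ω | F ω ≤ ε} = {ω | ε < F ω}ᶜ := by
    ext ω; simp [not_lt]
  rw [hcompl, measure_compl hBmeas (measure_ne_top P _), measure_univ]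
  have h1δ : ENNReal.ofReal (1 - δ) = 1 - ENNReal.ofReal δ := by
    rw [ENNReal.ofReal_sub _ hδ0.le, ENNReal.ofReal_one]
  rw [h1δ]
  exact tsub_le_tsub_left hbad 1
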